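/- Consider the eco-epidemiological system with nonnegative solution (S, I, P). Assume β Θ^u / a^u < c and γ f(Θ^u/a^u, 0, 0) < δ₁. Then r I(t) + P(t) → 0 as t → ∞; i.e. infected prey and predators simultaneously go extinct. -/

import Mathlib

open Real Filter

lemma decay_aux (k a : ℝ) (u u' : ℝ → ℝ)
    (hd : ∀ t ∈ Set.Ici a, HasDerivAt u (u' t) t)
    (hb : ∀ t ∈ Set.Ici a, u' t ≤ -k * u t) :
    ∀ t ∈ Set.Ici a, u t ≤ u a * Real.exp (k * a) * Real.exp (-(k * t)) := by
  set v : ℝ → ℝ := fun t => u t * Real.exp (k * t) with hvdef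
  have hdv : ∀ t ∈ Set.Ici a, HasDerivAt v ((u' t + k * u t) * Real.exp (k * t)) t := by
    intro t ht
    have h1 : HasDerivAt (fun t : ℝ => Real.exp (k * t)) (k * Real.exp (k * t)) t := by
      have := ((hasDerivAt_id t).const_mul k).exp
      simp only [id, mul_one] at this
      rw [mul_comm]; exact this
    have h2 := (hd t ht).mul h1
    exact h2.congr_deriv (by ring)
  have hanti : AntitoneOn v (Set.Ici a) := by
    apply antitoneOn_of_deriv_nonpos (convex_Ici a)
    · exact fun t ht => ((hdv t ht).continuousAt).continuousWithinAt
    · intro t ht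
      rw [interior_Ici] at ht
      exact ((hdv t (Set.mem_Ici.mpr (le_of_lt ht))).differentiableAt).differentiableWithinAt
    · intro t ht
      rw [interior_Ici] at ht
      rw [(hdv t (Set.mem_Ici.mpr (le_of_lt ht))).deriv]
      have h1 := hb t (Set.mem_Ici.mpr (le_of_lt ht))
      have h3 : u' t + k * u t ≤ 0 := by linarith
      exact mul_nonpos_iff.mpr (Or.inr ⟨h3, (Real.exp_pos _).le⟩)
  intro t ht
  have h2 : u t * Real.exp (k * t) ≤ u a * Real.exp (k * a) :=
    hanti Set.self_mem_Ici ht ht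
  calc u t = u t * Real.exp (k * t) * Real.exp (-(k * t)) := by
        rw [mul_assoc, ← Real.exp_add]; simp
    _ ≤ u a * Real.exp (k * a) * Real.exp (-(k * t)) :=
        mul_le_mul_of_nonneg_right h2 (Real.exp_pos _).le

lemma exp_decay_tendsto (k C : ℝ) (hk : 0 < k) :
    Tendsto (fun t : ℝ => C * Real.exp (-(k * t))) atTop (nhds 0) := by
  have h1 : Tendsto (fun t : ℝ => k * t) atTop atTop :=
    Tendsto.const_mul_atTop hk tendsto_id
  have h2 : Tendsto (fun t : ℝ => -(k * t)) atTop atBot :=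
    tendsto_neg_atTop_atBot.comp h1
  have h3 : Tendsto (fun t : ℝ => Real.exp (-(k * t))) atTop (nhds 0) :=
    Real.tendsto_exp_atBot.comp h2
  simpa using h3.const_mul C

theorem stmt11 (μ β r c γ δ₁ δ₂ η Λℓ Λu t₀ : ℝ)
    (l : ℝ → ℝ) (f g : ℝ → ℝ → ℝ → ℝ) (S I P : ℝ → ℝ)
    (hμ : 0 < μ) (hβ : 0 < β) (hr : 0 < r) (hc : 0 < c) (hγ : 0 < γ)
    (hδ₁ : 0 < δ₁) (hδ₂ : 0 < δ₂) (hη : 0 < η)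
    (hΛℓ : 0 < Λℓ) (hΛ : Λℓ ≤ Λu)
    (hl : Continuous l) (hlb : ∀ t, Λℓ ≤ l t ∧ l t ≤ Λu)
    (hf_cont : Continuous (fun p : ℝ × ℝ × ℝ => f p.1 p.2.1 p.2.2))
    (hf_nonneg : ∀ x y z, 0 ≤ x → 0 ≤ y → 0 ≤ z → 0 ≤ f x y z)
    (hg_nonneg : ∀ x y z, 0 ≤ x → 0 ≤ y → 0 ≤ z → 0 ≤ g x y z)
    (hfS : ∀ y z, MonotoneOn (fun x => f x y z) (Set.Ici 0))
    (hfI : ∀ x z, AntitoneOn (fun y => f x y z) (Set.Ici 0))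
    (hfP : ∀ x y, AntitoneOn (fun z => f x y z) (Set.Ici 0))
    (hpos : ∀ t, t₀ ≤ t → 0 ≤ S t ∧ 0 ≤ I t ∧ 0 ≤ P t)
    (hS : ∀ t, t₀ ≤ t → HasDerivAt S
      (l t - μ * S t - f (S t) (I t) (P t) * P t - β * S t * I t) t)
    (hI : ∀ t, t₀ ≤ t → HasDerivAt I
      (β * S t * I t - η * g (S t) (I t) (P t) * I t - c * I t) t)
    (hP : ∀ t, t₀ ≤ t → HasDerivAt P
      (γ * f (S t) (I t) (P t) * P t + r * η * g (S t) (I t) (P t) * I t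
        - δ₁ * P t - δ₂ * (P t) ^ 2) t)
    (hthr1 : β * (max γ r * Λu / min μ δ₁) / max γ r < c)
    (hthr2 : γ * f (max γ r * Λu / min μ δ₁ / max γ r) 0 0 < δ₁) :
    Tendsto (fun t => r * I t + P t) atTop (nhds 0) := by
  have hΛu : 0 < Λu := lt_of_lt_of_le hΛℓ hΛ
  have hm : 0 < min μ δ₁ := lt_min hμ hδ₁
  have ha : 0 < max γ r := lt_of_lt_of_le hγ (le_max_left _ _)
  set Θ : ℝ := Λu / min μ δ₁ with hΘdef
  have hΘpos : 0 < Θ := div_pos hΛu hm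
  have hkey : max γ r * Λu / min μ δ₁ / max γ r = Θ := by
    field_simp [hΘdef]
    rw [hΘdef, mul_div_cancel₀ _ hm.ne']
  have hthr2' : γ * f Θ 0 0 < δ₁ := by rwa [hkey] at hthr2
  have hthr1' : β * Θ < c := by
    have h : β * (max γ r * Λu / min μ δ₁) / max γ r = β * Θ := by
      field_simp [hΘdef]
      rw [hΘdef, mul_div_cancel₀ _ hm.ne']
    rwa [h] at hthr1
  -- continuity of x ↦ γ * f x 0 0 at Θ, pick δ'
  have hcf : Continuous fun x : ℝ => γ * f x 0 0 := by
    have : Continuous fun x : ℝ => f x 0 0 :=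
      hf_cont.comp (continuous_id.prodMk (continuous_const.prodMk continuous_const))
    exact continuous_const.mul this
  have hev : ∀ᶠ x in nhds Θ, γ * f x 0 0 < δ₁ :=
    hcf.continuousAt.eventually_lt_const hthr2'
  obtain ⟨δ₀, hδ₀, hball⟩ := Metric.eventually_nhds_iff.mp hev
  set δ' : ℝ := min (δ₀ / 2) ((c - β * Θ) / (2 * β)) with hδ'def
  have hδ'pos : 0 < δ' := lt_min (by linarith) (div_pos (by linarith) (by positivity))
  set B : ℝ := Θ + δ' with hBdef
  have hBnn : 0 ≤ B := by positivity
  have hfB : γ * f B 0 0 < δ₁ := by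
    apply hball
    have : |B - Θ| = δ' := by
      rw [hBdef]; simp [abs_of_nonneg hδ'pos.le]
    rw [Real.dist_eq, this]
    calc δ' ≤ δ₀ / 2 := min_le_left _ _
      _ < δ₀ := by linarith
  have hβB : β * B < c := by
    have h1 : δ' ≤ (c - β * Θ) / (2 * β) := min_le_right _ _
    have h2 : β * δ' ≤ (c - β * Θ) / 2 := by
      have h3 := mul_le_mul_of_nonneg_left h1 hβ.le
      have h4 : β * ((c - β * Θ) / (2 * β)) = (c - β * Θ) / 2 := by
        field_simp
      rw [h4] at h3
      exact h3
    rw [hBdef]; nlinarith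
  -- eventual bound on S
  have hΛμΘ : Λu / μ ≤ Θ := by
    rw [hΘdef]
    exact div_le_div_of_nonneg_left hΛu.le hm (min_le_left _ _)
  have hSdecay : ∀ t ∈ Set.Ici t₀,
      S t - Λu / μ ≤ (S t₀ - Λu / μ) * Real.exp (μ * t₀) * Real.exp (-(μ * t)) := by
    apply decay_aux μ t₀ (fun t => S t - Λu / μ)
      (fun t => l t - μ * S t - f (S t) (I t) (P t) * P t - β * S t * I t)
    · intro t ht
      exact (hS t ht).sub_const _
    · intro t ht
      obtain ⟨hS0, hI0, hP0⟩ := hpos t ht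
      have hfP0 : 0 ≤ f (S t) (I t) (P t) * P t :=
        mul_nonneg (hf_nonneg _ _ _ hS0 hI0 hP0) hP0
      have hSI : 0 ≤ β * S t * I t := by positivity
      have hlu := (hlb t).2
      have hμΛ : μ * (Λu / μ) = Λu := mul_div_cancel₀ _ (ne_of_gt hμ)
      have : -μ * (S t - Λu / μ) = Λu - μ * S t := by
        rw [neg_mul, mul_sub, hμΛ]; ring
      rw [this]
      linarith
  have htail : ∀ᶠ t in atTop, t₀ ≤ t ∧ S t ≤ B := by
    have h1 : ∀ᶠ t in atTop,
        (S t₀ - Λu / μ) * Real.exp (μ * t₀) * Real.exp (-(μ * t)) < δ' := by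
      have := exp_decay_tendsto μ ((S t₀ - Λu / μ) * Real.exp (μ * t₀)) hμ
      exact this.eventually_lt_const hδ'pos
    filter_upwards [h1, eventually_ge_atTop t₀] with t h1t h2t
    refine ⟨h2t, ?_⟩
    have := hSdecay t h2t
    have hB' : Λu / μ + δ' ≤ B := by rw [hBdef]; linarith
    linarith
  obtain ⟨T, hT⟩ := eventually_atTop.mp htail
  -- the decay rate
  set ε : ℝ := min (c - β * B) (δ₁ - γ * f B 0 0) with hεdef
  have hεpos : 0 < ε := lt_min (by linarith) (by linarith)
  -- differential inequality for u = r I + P on [T, ∞)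
  have hudecay : ∀ t ∈ Set.Ici T,
      r * I t + P t ≤ (r * I T + P T) * Real.exp (ε * T) * Real.exp (-(ε * t)) := by
    apply decay_aux ε T (fun t => r * I t + P t)
      (fun t => r * (β * S t * I t - η * g (S t) (I t) (P t) * I t - c * I t) +
        (γ * f (S t) (I t) (P t) * P t + r * η * g (S t) (I t) (P t) * I t
          - δ₁ * P t - δ₂ * (P t) ^ 2))
    · intro t ht
      obtain ⟨ht₀, -⟩ := hT t ht
      exact ((hI t ht₀).const_mul r).add (hP t ht₀)
    · intro t ht
      obtain ⟨ht₀, hSB⟩ := hT t ht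
      obtain ⟨hS0, hI0, hP0⟩ := hpos t ht₀
      have hmem0 : (0:ℝ) ∈ Set.Ici (0:ℝ) := Set.self_mem_Ici
      have hfchain : f (S t) (I t) (P t) ≤ f B 0 0 := by
        have h1 : f (S t) (I t) (P t) ≤ f (S t) 0 (P t) :=
          hfI (S t) (P t) hmem0 hI0 hI0
        have h2 : f (S t) 0 (P t) ≤ f (S t) 0 0 :=
          hfP (S t) 0 hmem0 hP0 hP0
        have h3 : f (S t) 0 0 ≤ f B 0 0 :=
          hfS 0 0 hS0 hBnn hSB
        linarith
      have h1 : β * S t - c ≤ -ε := by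
        have hε1 : ε ≤ c - β * B := min_le_left _ _
        have : β * S t ≤ β * B := mul_le_mul_of_nonneg_left hSB hβ.le
        linarith
      have h2 : γ * f (S t) (I t) (P t) - δ₁ - δ₂ * P t ≤ -ε := by
        have hε2 : ε ≤ δ₁ - γ * f B 0 0 := min_le_right _ _
        have hγf : γ * f (S t) (I t) (P t) ≤ γ * f B 0 0 :=
          mul_le_mul_of_nonneg_left hfchain hγ.le
        have hδP : 0 ≤ δ₂ * P t := mul_nonneg hδ₂.le hP0
        linarith
      have hrI : 0 ≤ r * I t := mul_nonneg hr.le hI0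
      calc r * (β * S t * I t - η * g (S t) (I t) (P t) * I t - c * I t) +
            (γ * f (S t) (I t) (P t) * P t + r * η * g (S t) (I t) (P t) * I t
              - δ₁ * P t - δ₂ * (P t) ^ 2)
          = (β * S t - c) * (r * I t) +
            (γ * f (S t) (I t) (P t) - δ₁ - δ₂ * P t) * P t := by ring
        _ ≤ (-ε) * (r * I t) + (-ε) * P t :=
            add_le_add (mul_le_mul_of_nonneg_right h1 hrI)
              (mul_le_mul_of_nonneg_right h2 hP0)
        _ = -ε * (r * I t + P t) := by ring
  -- squeeze
  have hupper : ∀ᶠ t in atTop,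
      r * I t + P t ≤ (r * I T + P T) * Real.exp (ε * T) * Real.exp (-(ε * t)) := by
    filter_upwards [eventually_ge_atTop T] with t ht
    exact hudecay t ht
  have hlower : ∀ᶠ t in atTop, (0:ℝ) ≤ r * I t + P t := by
    filter_upwards [eventually_ge_atTop T] with t ht
    obtain ⟨ht₀, -⟩ := hT t ht
    obtain ⟨-, hI0, hP0⟩ := hpos t ht₀
    positivity
  exact tendsto_of_tendsto_of_tendsto_of_le_of_le' tendsto_const_nhds
    (exp_decay_tendsto ε ((r * I T + P T) * Real.exp (ε * T)) hεpos) hlower hupper
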